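/- Let $A$, $B$, $C$ be points on the unit circle with $\angle ACB \ge \pi/2$ being the largest angle of triangle $ABC$, let $\lambda \ge 2$, and let $M$ be the antipode of $C$ on the unit circle. Then $MA^{\lambda} + MB^{\lambda} + MC^{\lambda} > 2 + 2^{\lambda}$. -/

import Mathlib

open InnerProductGeometry RealInnerProductSpace in
theorem stmt_17 (A B C : EuclideanSpace ℝ (Fin 2))
    (hA : A ∈ Metric.sphere (0 : EuclideanSpace ℝ (Fin 2)) 1)
    (hB : B ∈ Metric.sphere (0 : EuclideanSpace ℝ (Fin 2)) 1)
    (hC : C ∈ Metric.sphere (0 : EuclideanSpace ℝ (Fin 2)) 1)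
    (hAB : A ≠ B) (hBC : B ≠ C) (hCA : C ≠ A)
    (hobt : Real.pi / 2 ≤ EuclideanGeometry.angle A C B)
    (h1 : EuclideanGeometry.angle B A C ≤ EuclideanGeometry.angle A C B)
    (h2 : EuclideanGeometry.angle A B C ≤ EuclideanGeometry.angle A C B)
    (lam : ℝ) (hlam : 2 ≤ lam) :
    2 + (2 : ℝ) ^ lam <
      dist (-C) A ^ lam + dist (-C) B ^ lam + dist (-C) C ^ lam := by
  have nA : ‖A‖ = 1 := by simpa using hA
  have nB : ‖B‖ = 1 := by simpa using hB
  have nC : ‖C‖ = 1 := by simpa using hC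
  -- inner product condition from the obtuse angle
  have hang : EuclideanGeometry.angle A C B = angle (A - C) (B - C) := by
    rw [EuclideanGeometry.angle]; norm_num [vsub_eq_sub]
  have hcos : Real.cos (EuclideanGeometry.angle A C B) ≤ 0 := by
    apply Real.cos_nonpos_of_pi_div_two_le_of_le hobt
    rw [hang]
    have := angle_le_pi (A - C) (B - C)
    linarith [Real.pi_pos]
  have hinner : ⟪A - C, B - C⟫ ≤ 0 := by
    rw [← cos_angle_mul_norm_mul_norm, ← hang]
    exact mul_nonpos_of_nonpos_of_nonneg hcos (by positivity)
  have hAB' : (-1 : ℝ) ≤ ⟪A, B⟫ := by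
    have := abs_real_inner_le_norm A B
    rw [nA, nB] at this
    linarith [abs_le.mp this |>.1]
  have hCC : ⟪C, C⟫ = 1 := by
    rw [real_inner_self_eq_norm_sq, nC]; norm_num
  have hexp : ⟪A - C, B - C⟫ = ⟪A, B⟫ - ⟪A, C⟫ - ⟪C, B⟫ + ⟪C, C⟫ := by
    simp only [inner_sub_left, inner_sub_right]; rw [real_inner_comm B C]; ring
  have hsum : 0 ≤ ⟪A, C⟫ + ⟪C, B⟫ := by
    rw [hexp, hCC] at hinner; linarith
  -- distances
  set x := dist (-C) A with hxdef
  set y := dist (-C) B with hydef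
  have hx0 : 0 ≤ x := dist_nonneg
  have hy0 : 0 ≤ y := dist_nonneg
  have hx2 : x ^ 2 = 2 + 2 * ⟪A, C⟫ := by
    rw [hxdef, dist_eq_norm]
    have : -C - A = -(A + C) := by abel
    rw [this, norm_neg, norm_add_sq_real, nA, nC, real_inner_comm]
    ring
  have hy2 : y ^ 2 = 2 + 2 * ⟪C, B⟫ := by
    rw [hydef, dist_eq_norm]
    have : -C - B = -(B + C) := by abel
    rw [this, norm_neg, norm_add_sq_real, nB, nC, real_inner_comm C B]
    ring
  have hxy : 4 ≤ x ^ 2 + y ^ 2 := by rw [hx2, hy2]; linarith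
  have hMC : dist (-C) C = 2 := by
    rw [dist_eq_norm]
    have : -C - C = -((2 : ℝ) • C) := by
      rw [two_smul]; abel
    rw [this, norm_neg, norm_smul, nC]; norm_num
  rw [hMC]
  have h2lam : (2 : ℝ) ≤ 2 ^ lam := by
    calc (2 : ℝ) = 2 ^ (1 : ℝ) := by norm_num
    _ ≤ 2 ^ lam := Real.rpow_le_rpow_of_exponent_le one_le_two (by linarith)
  -- key inequality: 2 < x^lam + y^lam
  have key : ∀ u v : ℝ, 0 ≤ u → 0 ≤ v → v ≤ u → 4 ≤ u ^ 2 + v ^ 2 →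
      2 < u ^ lam + v ^ lam := by
    intro u v hu hv hvu h4
    have hu2 : 2 ≤ u ^ 2 := by nlinarith
    have hus : Real.sqrt 2 ≤ u := by
      rw [← Real.sqrt_sq hu]; exact Real.sqrt_le_sqrt hu2
    have hs1 : (1 : ℝ) ≤ Real.sqrt 2 := by
      rw [show (1 : ℝ) = Real.sqrt 1 by simp]
      exact Real.sqrt_le_sqrt (by norm_num)
    have hulam : 2 ≤ u ^ lam := by
      calc (2 : ℝ) = Real.sqrt 2 ^ (2 : ℝ) := by
            rw [Real.rpow_two, Real.sq_sqrt]; norm_num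
        _ ≤ Real.sqrt 2 ^ lam := Real.rpow_le_rpow_of_exponent_le hs1 hlam
        _ ≤ u ^ lam := Real.rpow_le_rpow (Real.sqrt_nonneg 2) hus (by linarith)
    rcases lt_or_eq_of_le hv with hv' | hv'
    · have : 0 < v ^ lam := Real.rpow_pos_of_pos hv' lam
      linarith
    · -- v = 0, so u^2 ≥ 4, u ≥ 2
      have hu4 : 2 ≤ u := by nlinarith
      have : 4 ≤ u ^ lam := by
        calc (4 : ℝ) = 2 ^ (2 : ℝ) := by
              rw [Real.rpow_two]; norm_num
          _ ≤ 2 ^ lam := Real.rpow_le_rpow_of_exponent_le one_le_two hlam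
          _ ≤ u ^ lam := Real.rpow_le_rpow (by norm_num) hu4 (by linarith)
      have hv0 : v ^ lam = 0 := by
        rw [← hv', Real.zero_rpow (by linarith)]
      linarith
  rcases le_total y x with h | h
  · have := key x y hx0 hy0 h hxy; linarith
  · have := key y x hy0 hx0 h (by linarith); linarith
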